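/- Let D_n = N if 2s(N) ≤ n and D_n = 0 otherwise, where N has distribution P(N = m) = C/(m (log₂ m)^α) on m ≥ 2, α ∈ (1,2], and s(m) = ⌊log₂ m⌋ + 1. Then H(D_n) = Θ(n^{2-α}) for α ∈ (1,2) and H(D_n) = Θ(log₂ n) for α = 2, as n → ∞. -/

import Mathlib

open MeasureTheory ProbabilityTheory

/-- Base-2 logarithm. -/
noncomputable def log2 (x : ℝ) : ℝ := Real.log x / Real.log 2

/-- Probability of an event, as a real number. -/
noncomputable def pr {Ω : Type*} [MeasurableSpace Ω] (μ : Measure Ω) (A : Set Ω) : ℝ :=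
  (μ A).toReal

/-- Shannon entropy (in bits) of a discrete random variable. -/
noncomputable def Hent {Ω S : Type*} [MeasurableSpace Ω] (μ : Measure Ω) (X : Ω → S) : ℝ :=
  ∑' s : S, -(pr μ (X ⁻¹' {s}) * log2 (pr μ (X ⁻¹' {s})))

/-- `s(m) = ⌊log₂ m⌋ + 1`, the length of the binary expansion of `m`. -/
def binLen (m : ℕ) : ℕ := Nat.log 2 m + 1



lemma log_two_pos : (0:ℝ) < Real.log 2 := Real.log_pos one_lt_two
lemma log_two_le_one : Real.log 2 ≤ 1 :=
  (Real.log_le_sub_one_of_pos two_pos).trans (by norm_num)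
lemma half_le_log_two : (1/2:ℝ) ≤ Real.log 2 := by
  have := Real.log_two_gt_d9; norm_num at this ⊢; linarith

lemma log2_two : log2 2 = 1 := div_self (ne_of_gt log_two_pos)
lemma log2_one : log2 1 = 0 := by simp [log2]
lemma log2_mono {x y : ℝ} (hx : 0 < x) (h : x ≤ y) : log2 x ≤ log2 y :=
  div_le_div_of_nonneg_right (Real.log_le_log hx h) log_two_pos.le
lemma log2_nonneg {x : ℝ} (h : 1 ≤ x) : 0 ≤ log2 x := by
  rw [← log2_one]; exact log2_mono one_pos h
lemma one_le_log2 {x : ℝ} (h : 2 ≤ x) : 1 ≤ log2 x := by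
  rw [← log2_two]; exact log2_mono two_pos h
lemma log2_nonpos {x : ℝ} (h0 : 0 ≤ x) (h : x ≤ 1) : log2 x ≤ 0 :=
  div_nonpos_of_nonpos_of_nonneg (Real.log_nonpos h0 h) log_two_pos.le
lemma log2_pow (j : ℕ) : log2 ((2:ℝ)^j) = j := by
  rw [log2, Real.log_pow]; field_simp
lemma log2_mul {x y : ℝ} (hx : x ≠ 0) (hy : y ≠ 0) : log2 (x*y) = log2 x + log2 y := by
  rw [log2, Real.log_mul hx hy, add_div]; rfl
lemma log2_div {x y : ℝ} (hx : x ≠ 0) (hy : y ≠ 0) : log2 (x/y) = log2 x - log2 y := by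
  rw [log2, Real.log_div hx hy, sub_div]; rfl
lemma log2_rpow {x : ℝ} (hx : 0 < x) (p : ℝ) : log2 (x ^ p) = p * log2 x := by
  rw [log2, Real.log_rpow hx, log2, mul_div_assoc]
/-- `log2 L ≤ 2 (L - 1) ≤ 2 L` for `L ≥ 1`. -/
lemma log2_le_two_mul {x : ℝ} (h : 1 ≤ x) : log2 x ≤ 2 * x := by
  have h1 : Real.log x ≤ x - 1 := Real.log_le_sub_one_of_pos (by linarith)
  have h2 : log2 x ≤ Real.log x * 2 := by
    rw [log2, div_le_iff₀ log_two_pos]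
    nlinarith [Real.log_nonneg h, half_le_log_two]
  nlinarith [Real.log_nonneg h]
/-- `-(p * log2 p) ∈ [0, 2]` for `p ∈ [0,1]`. -/
lemma negmullog2_nonneg {p : ℝ} (h0 : 0 ≤ p) (h1 : p ≤ 1) : 0 ≤ -(p * log2 p) := by
  have := log2_nonpos h0 h1
  nlinarith
lemma negmullog2_le_two {p : ℝ} (h0 : 0 ≤ p) (h1 : p ≤ 1) : -(p * log2 p) ≤ 2 := by
  rcases eq_or_lt_of_le h0 with rfl | hp
  · simp
  · have hlog : Real.log p⁻¹ ≤ p⁻¹ - 1 := Real.log_le_sub_one_of_pos (by positivity)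
    rw [Real.log_inv] at hlog
    have : -(p * Real.log p) ≤ 1 - p := by
      have h3 := mul_le_mul_of_nonneg_left hlog hp.le
      have h4 : p * (p⁻¹ - 1) = 1 - p := by field_simp
      nlinarith
    have h2 : -(p * log2 p) = -(p * Real.log p) / Real.log 2 := by
      rw [log2]; ring
    rw [h2, div_le_iff₀ log_two_pos]
    nlinarith [half_le_log_two]


/-- dyadic decomposition of a sum. -/
lemma dyadic_split (f : ℕ → ℝ) (j₀ : ℕ) : ∀ k, j₀ ≤ k →
    ∑ m ∈ Finset.Ico (2^j₀) (2^k), f m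
      = ∑ j ∈ Finset.Ico j₀ k, ∑ m ∈ Finset.Ico (2^j) (2^(j+1)), f m := by
  intro k hk
  induction k with
  | zero => simp_all
  | succ k ih =>
    rcases Nat.lt_or_ge j₀ (k+1) with h | h
    · have hk' : j₀ ≤ k := Nat.lt_succ_iff.mp h
      rw [← Finset.sum_Ico_consecutive f (Nat.pow_le_pow_right (by norm_num) hk')
            (Nat.pow_le_pow_right (by norm_num) (Nat.le_succ k)),
          ih hk', Finset.sum_Ico_succ_top hk']
    · have : j₀ = k+1 := le_antisymm hk h
      subst this; simp

/-- telescoping over `Ico`. -/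
lemma telescope_Ico (F : ℕ → ℝ) (a : ℕ) (ha : 1 ≤ a) : ∀ k, a ≤ k →
    ∑ j ∈ Finset.Ico a k, (F j - F (j-1)) = F (k-1) - F (a-1) := by
  intro k hak
  induction k with
  | zero => omega
  | succ k ih =>
    rcases Nat.lt_or_ge a (k+1) with h | h
    · have hk' : a ≤ k := Nat.lt_succ_iff.mp h
      rw [Finset.sum_Ico_succ_top hk', ih hk']
      simp only [Nat.add_sub_cancel]
      have h1 : 1 ≤ k := le_trans ha hk'
      ring
    · have : a = k+1 := le_antisymm hak h
      subst this; simp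

/-- Bernoulli/MVT: `p * j^(p-1) ≤ j^p - (j-1)^p` for `p ∈ (0,1]`, `j ≥ 1`. -/
lemma rpow_mvt {p : ℝ} (hp0 : 0 < p) (hp1 : p ≤ 1) {j : ℕ} (hj : 1 ≤ j) :
    p * (j:ℝ) ^ (p-1) ≤ (j:ℝ) ^ p - ((j-1:ℕ):ℝ) ^ p := by
  rcases eq_or_lt_of_le hj with h1 | h2
  · have hj1 : j = 1 := h1.symm
    subst hj1
    simp only [Nat.cast_one, Real.one_rpow, Nat.sub_self, Nat.cast_zero,
      Real.zero_rpow (ne_of_gt hp0), one_mul, sub_zero]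
    linarith
  · -- MVT on [j-1, j]
    set a : ℝ := ((j-1:ℕ):ℝ) with ha
    set b : ℝ := (j:ℝ) with hb
    have hab : a < b := by
      rw [ha, hb]; exact_mod_cast Nat.sub_lt (by omega) one_pos
    have ha1 : (1:ℝ) ≤ a := by
      rw [ha]; exact_mod_cast Nat.le_sub_one_of_lt h2
    have hcont : ContinuousOn (fun x : ℝ => x ^ p) (Set.Icc a b) := by
      intro x hx
      exact (Real.continuousAt_rpow_const x p (Or.inr hp0.le)).continuousWithinAt
    have hderiv : ∀ x ∈ Set.Ioo a b, HasDerivAt (fun x : ℝ => x ^ p) (p * x ^ (p-1)) x := by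
      intro x hx
      have hx0 : x ≠ 0 := by
        have : (1:ℝ) ≤ x := le_of_lt (lt_of_le_of_lt ha1 hx.1)
        linarith
      simpa [mul_comm] using Real.hasDerivAt_rpow_const (p := p) (Or.inl hx0)
    obtain ⟨c, hc, hceq⟩ := exists_hasDerivAt_eq_slope (fun x : ℝ => x ^ p)
      (fun x => p * x ^ (p-1)) hab hcont hderiv
    have hba : b - a = 1 := by rw [ha, hb]; push_cast [Nat.cast_sub (by omega : 1 ≤ j)]; ring
    have hslope : p * c ^ (p-1) = b ^ p - a ^ p := by
      rw [hceq, hba, div_one]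
    have hmono : b ^ (p-1) ≤ c ^ (p-1) := by
      apply Real.rpow_le_rpow_of_nonpos (lt_of_le_of_lt (le_trans zero_le_one ha1) hc.1)
        hc.2.le (by linarith)
    calc p * b ^ (p-1) ≤ p * c ^ (p-1) := by nlinarith
    _ = b ^ p - a ^ p := hslope

lemma jsum_upper_lt {α : ℝ} (hα1 : 1 < α) (hα2 : α < 2) (k : ℕ) (hk : 1 ≤ k) :
    ∑ j ∈ Finset.Ico 1 k, (j:ℝ)^(1-α) ≤ (k:ℝ)^(2-α) / (2-α) := by
  set p : ℝ := 2 - α with hp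
  have hp0 : 0 < p := by simp [hp]; linarith
  have hp1 : p ≤ 1 := by simp [hp]; linarith
  have step : ∀ j ∈ Finset.Ico 1 k, (j:ℝ)^(1-α) ≤ ((j:ℝ)^p - ((j-1:ℕ):ℝ)^p)/p := by
    intro j hj
    rw [Finset.mem_Ico] at hj
    have := rpow_mvt hp0 hp1 hj.1
    have h1 : (1:ℝ) - α = p - 1 := by rw [hp]; ring
    rw [h1, le_div_iff₀ hp0, mul_comm]
    exact this
  calc ∑ j ∈ Finset.Ico 1 k, (j:ℝ)^(1-α)
      ≤ ∑ j ∈ Finset.Ico 1 k, ((j:ℝ)^p - ((j-1:ℕ):ℝ)^p)/p := Finset.sum_le_sum step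
    _ = (∑ j ∈ Finset.Ico 1 k, (((j:ℕ):ℝ)^p - (((j-1:ℕ)):ℝ)^p))/p := by
        rw [Finset.sum_div]
    _ = (((k-1:ℕ):ℝ)^p - ((0:ℕ):ℝ)^p)/p := by
        rw [telescope_Ico (fun j => ((j:ℕ):ℝ)^p) 1 le_rfl k hk]
    _ ≤ (k:ℝ)^p/p := by
        apply div_le_div_of_nonneg_right ?_ hp0.le
        simp only [Nat.cast_zero, Real.zero_rpow (ne_of_gt hp0), sub_zero]
        exact Real.rpow_le_rpow (Nat.cast_nonneg _) (by exact_mod_cast Nat.sub_le k 1) hp0.le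


/-- `1/j ≤ log2 j - log2 (j-1)` for `j ≥ 2` (natural `j`, nat subtraction). -/
lemma inv_le_log2_diff {j : ℕ} (hj2 : 2 ≤ j) : ((j:ℝ))⁻¹ ≤ log2 j - log2 ((j-1:ℕ)) := by
  have hc : ((j-1:ℕ):ℝ) = (j:ℝ) - 1 := by
    push_cast [Nat.cast_sub (by omega : 1 ≤ j)]; ring
  have hjpos : (0:ℝ) < j := by positivity
  have hj1 : (1:ℝ) ≤ (j:ℝ) - 1 := by
    have : (2:ℝ) ≤ j := by exact_mod_cast hj2
    linarith
  have hln : (j:ℝ)⁻¹ ≤ Real.log j - Real.log ((j:ℝ)-1) := by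
    have hx : (0:ℝ) < ((j:ℝ)-1)/(j:ℝ) := by positivity
    have h1 := Real.log_le_sub_one_of_pos hx
    rw [Real.log_div (by linarith) (ne_of_gt hjpos)] at h1
    have h2 : ((j:ℝ)-1)/(j:ℝ) - 1 = -(j:ℝ)⁻¹ := by field_simp; ring
    linarith
  have : Real.log j - Real.log ((j:ℝ)-1) ≤ log2 j - log2 ((j:ℝ)-1) := by
    unfold log2
    rw [div_sub_div_same]
    have hnum : 0 ≤ Real.log j - Real.log ((j:ℝ)-1) := le_trans (by positivity) hln
    calc Real.log j - Real.log ((j:ℝ)-1)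
        = (Real.log j - Real.log ((j:ℝ)-1)) / 1 := by ring
      _ ≤ (Real.log j - Real.log ((j:ℝ)-1)) / Real.log 2 :=
          div_le_div_of_nonneg_left hnum log_two_pos log_two_le_one
  rw [hc]
  linarith

/-- `log2 (j+2) - log2 (j+1) ≤ 2/(j+1)`. -/
lemma log2_diff_le {j : ℕ} : log2 ((j:ℝ)+2) - log2 ((j:ℝ)+1) ≤ 2 * ((j:ℝ)+1)⁻¹ := by
  have h1 : (0:ℝ) < (j:ℝ)+1 := by positivity
  have hln : Real.log ((j:ℝ)+2) - Real.log ((j:ℝ)+1) ≤ ((j:ℝ)+1)⁻¹ := by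
    have hx : (0:ℝ) < ((j:ℝ)+2)/((j:ℝ)+1) := by positivity
    have h2 := Real.log_le_sub_one_of_pos hx
    rw [Real.log_div (by linarith) (ne_of_gt h1)] at h2
    have h3 : ((j:ℝ)+2)/((j:ℝ)+1) - 1 = ((j:ℝ)+1)⁻¹ := by
      field_simp
      norm_num
    linarith
  have hmono : Real.log ((j:ℝ)+1) ≤ Real.log ((j:ℝ)+2) := Real.log_le_log h1 (by linarith)
  unfold log2
  rw [div_sub_div_same, div_le_iff₀ log_two_pos]
  have : ((j:ℝ)+1)⁻¹ ≤ 2 * ((j:ℝ)+1)⁻¹ * Real.log 2 := by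
    have hpos : (0:ℝ) < ((j:ℝ)+1)⁻¹ := by positivity
    nlinarith [half_le_log_two]
  linarith

lemma jsum_upper_eq (k : ℕ) (hk : 2 ≤ k) :
    ∑ j ∈ Finset.Ico 1 k, ((j:ℝ))⁻¹ ≤ 1 + log2 k := by
  rw [Finset.sum_eq_sum_Ico_succ_bot (by omega : 1 < k)]
  have step : ∀ j ∈ Finset.Ico 2 k, ((j:ℝ))⁻¹ ≤ log2 j - log2 ((j-1:ℕ)) := by
    intro j hj
    rw [Finset.mem_Ico] at hj
    exact inv_le_log2_diff hj.1
  have h2 : ∑ j ∈ Finset.Ico 2 k, ((j:ℝ))⁻¹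
      ≤ ∑ j ∈ Finset.Ico 2 k, (log2 j - log2 ((j-1:ℕ))) := Finset.sum_le_sum step
  rw [telescope_Ico (fun j => log2 (j:ℕ)) 2 (by omega) k hk] at h2
  have h3 : log2 ((k-1:ℕ)) ≤ log2 k :=
    log2_mono (by exact_mod_cast (by omega : 0 < k - 1)) (by exact_mod_cast Nat.sub_le k 1)
  have h4 : log2 (((2:ℕ)-1:ℕ):ℝ) = 0 := by norm_num [log2_one]
  have h5 : ∑ j ∈ Finset.Ico 2 k, ((j:ℝ))⁻¹ ≤ log2 ((k-1:ℕ)) := by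
    rw [h4] at h2; linarith
  norm_num
  linarith

lemma jsum_lower_eq (j₀ k : ℕ) (hj₀ : 1 ≤ j₀) (hk : j₀ ≤ k) :
    (1/2) * (log2 ((k:ℝ)+1) - log2 ((j₀:ℝ)+1)) ≤ ∑ j ∈ Finset.Ico j₀ k, (((j:ℕ):ℝ)+1)⁻¹ := by
  have step : ∀ j ∈ Finset.Ico j₀ k,
      (1/2) * (log2 ((j:ℝ)+2) - log2 ((j:ℝ)+1)) ≤ ((j:ℝ)+1)⁻¹ := by
    intro j hj
    have := log2_diff_le (j := j)
    linarith
  have h1 : ∑ j ∈ Finset.Ico j₀ k, (1/2) * (log2 ((j:ℝ)+2) - log2 ((j:ℝ)+1))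
      ≤ ∑ j ∈ Finset.Ico j₀ k, (((j:ℕ):ℝ)+1)⁻¹ := Finset.sum_le_sum step
  have h2 : ∑ j ∈ Finset.Ico j₀ k, (log2 ((j:ℝ)+2) - log2 ((j:ℝ)+1))
      = log2 ((k:ℝ)+1) - log2 ((j₀:ℝ)+1) := by
    have heq : ∀ j ∈ Finset.Ico j₀ k,
        log2 ((j:ℝ)+2) - log2 ((j:ℝ)+1)
          = (fun j : ℕ => log2 (((j:ℕ):ℝ)+2)) j - (fun j : ℕ => log2 (((j:ℕ):ℝ)+2)) (j-1) := by
      intro j hj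
      rw [Finset.mem_Ico] at hj
      have : (((j-1:ℕ)):ℝ) + 2 = (j:ℝ) + 1 := by
        push_cast [Nat.cast_sub (by omega : 1 ≤ j)]; ring
      simp only [this]
    rw [Finset.sum_congr rfl heq,
      telescope_Ico (fun j => log2 (((j:ℕ):ℝ)+2)) j₀ hj₀ k hk]
    have e1 : (((k-1:ℕ)):ℝ) + 2 = (k:ℝ) + 1 := by
      push_cast [Nat.cast_sub (by omega : 1 ≤ k)]; ring
    have e2 : (((j₀-1:ℕ)):ℝ) + 2 = (j₀:ℝ) + 1 := by
      push_cast [Nat.cast_sub (by omega : 1 ≤ j₀)]; ring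
    rw [e1, e2]
  rw [← Finset.mul_sum, h2] at h1
  exact h1


lemma jsum_lower_lt {α : ℝ} (hα1 : 1 < α) (hα2 : α < 2) (j₀ k : ℕ)
    (hj₀ : 1 ≤ j₀) (hk : 2*j₀ ≤ k) :
    (1/2) * (k:ℝ)^(2-α) ≤ ∑ j ∈ Finset.Ico j₀ k, (((j:ℕ):ℝ)+1)^(1-α) := by
  have hk0 : (0:ℝ) < k := by
    have : 2 ≤ k := le_trans (by omega) hk
    exact_mod_cast by omega
  have step : ∀ j ∈ Finset.Ico j₀ k, (k:ℝ)^(1-α) ≤ ((j:ℝ)+1)^(1-α) := by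
    intro j hj
    rw [Finset.mem_Ico] at hj
    apply Real.rpow_le_rpow_of_nonpos (by positivity) (by exact_mod_cast hj.2) (by linarith)
  have h1 : ∑ j ∈ Finset.Ico j₀ k, (k:ℝ)^(1-α)
      ≤ ∑ j ∈ Finset.Ico j₀ k, (((j:ℕ):ℝ)+1)^(1-α) := Finset.sum_le_sum step
  rw [Finset.sum_const, Nat.card_Ico, nsmul_eq_mul] at h1
  have hcard : (k:ℝ)/2 ≤ ((k - j₀:ℕ):ℝ) := by
    have : ((k - j₀:ℕ):ℝ) = (k:ℝ) - (j₀:ℝ) := by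
      push_cast [Nat.cast_sub (by omega : j₀ ≤ k)]; ring
    rw [this]
    have h2 : (2:ℝ)*(j₀:ℝ) ≤ k := by exact_mod_cast hk
    linarith
  have hpow : (0:ℝ) ≤ (k:ℝ)^(1-α) := Real.rpow_nonneg hk0.le _
  have h3 : (k:ℝ)/2 * (k:ℝ)^(1-α) ≤ ((k - j₀:ℕ):ℝ) * (k:ℝ)^(1-α) :=
    mul_le_mul_of_nonneg_right hcard hpow
  have h4 : (1/2) * (k:ℝ)^(2-α) = (k:ℝ)/2 * (k:ℝ)^(1-α) := by
    rw [show (2:ℝ)-α = 1 + (1-α) by ring, Real.rpow_add hk0, Real.rpow_one]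
    ring
  linarith

set_option maxHeartbeats 1000000 in
/-- Let `D_n = N` if `2 s(N) ≤ n` and `D_n = 0` otherwise, where `N` has distribution
`P(N = m) = C/(m (log₂ m)^α)` on `m ≥ 2`, `α ∈ (1,2]`, and `s(m) = ⌊log₂ m⌋ + 1`. Then
`H(D_n) = Θ(n^{2-α})` for `α ∈ (1,2)` and `H(D_n) = Θ(log₂ n)` for `α = 2`, as `n → ∞`. -/
theorem entropy_Dn_theta
    {Ω : Type*} [MeasurableSpace Ω] (μ : Measure Ω) [IsProbabilityMeasure μ]
    (α : ℝ) (hα1 : 1 < α) (hα2 : α ≤ 2)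
    (C : ℝ) (hC : C⁻¹ = ∑' m : ℕ, 1 / ((m + 2 : ℝ) * log2 (m + 2) ^ α))
    (N : Ω → ℕ) (hN : Measurable N)
    (hdist : ∀ m : ℕ, 2 ≤ m → pr μ (N ⁻¹' {m}) = C / ((m : ℝ) * log2 m ^ α))
    (hsupp : ∀ m : ℕ, m < 2 → pr μ (N ⁻¹' {m}) = 0)
    (D : ℕ → Ω → ℕ)
    (hD : ∀ n ω, D n ω = if 2 * binLen (N ω) ≤ n then N ω else 0) :
    (α < 2 → ∃ K₁ K₂ : ℝ, 0 < K₁ ∧ 0 < K₂ ∧ ∃ N₀ : ℕ, ∀ n : ℕ, N₀ ≤ n →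
        K₁ * (n : ℝ) ^ (2 - α) ≤ Hent μ (D n) ∧
          Hent μ (D n) ≤ K₂ * (n : ℝ) ^ (2 - α)) ∧
    (α = 2 → ∃ K₁ K₂ : ℝ, 0 < K₁ ∧ 0 < K₂ ∧ ∃ N₀ : ℕ, ∀ n : ℕ, N₀ ≤ n →
        K₁ * log2 n ≤ Hent μ (D n) ∧ Hent μ (D n) ≤ K₂ * log2 n) := by
  -- basic pr facts
  have hpr0 : ∀ A : Set Ω, 0 ≤ pr μ A := fun A => ENNReal.toReal_nonneg
  have hpr1 : ∀ A : Set Ω, pr μ A ≤ 1 := fun A => by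
    rw [pr, ← ENNReal.toReal_one]
    exact ENNReal.toReal_mono ENNReal.one_ne_top prob_le_one
  have hprz : ∀ A : Set Ω, pr μ A = 0 → μ A = 0 := fun A hA => by
    rw [pr] at hA
    exact (ENNReal.toReal_eq_zero_iff _).mp hA |>.resolve_right (measure_ne_top μ A)
  -- total probability
  have htot : (∑' m : ℕ, μ (N ⁻¹' {m})) = 1 := by
    have hU : (⋃ m : ℕ, N ⁻¹' {m}) = Set.univ := by
      ext ω; simp
    have hd : Pairwise (Function.onFun Disjoint fun m : ℕ => N ⁻¹' {m}) := by
      intro a b hab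
      exact Set.disjoint_left.mpr (by intro ω ha hb; simp at ha hb; exact hab (ha ▸ hb.symm ▸ rfl))
    rw [← measure_iUnion hd (fun m => hN (measurableSet_singleton m)), hU, measure_univ]
  -- C is positive
  have hCpos : 0 < C := by
    rcases lt_trichotomy C 0 with h | h | h
    · exfalso
      have h2 := hdist 2 le_rfl
      have hl : log2 2 = 1 := div_self (ne_of_gt (Real.log_pos one_lt_two))
      push_cast at h2
      rw [hl] at h2
      simp only [Real.one_rpow, mul_one] at h2
      have := hpr0 (N ⁻¹' {2})
      rw [h2] at this
      nlinarith
    · exfalso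
      have hz : ∀ m : ℕ, μ (N ⁻¹' {m}) = 0 := by
        intro m
        rcases Nat.lt_or_ge m 2 with hm | hm
        · exact hprz _ (hsupp m hm)
        · apply hprz
          rw [hdist m hm, h]; simp
      rw [tsum_congr hz] at htot
      simp at htot
    · exact h
  -- representation of entropy as a finite sum
  have hrep : ∀ n : ℕ, 4 ≤ n →
      Hent μ (D n) = -(pr μ ((D n)⁻¹' {0}) * log2 (pr μ ((D n)⁻¹' {0})))
        + ∑ m ∈ Finset.Ico (2:ℕ) (2^(n/2)),
            -((C / ((m : ℝ) * log2 m ^ α)) * log2 (C / ((m : ℝ) * log2 m ^ α))) := by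
    intro n hn
    set k := n/2 with hkdef
    have hk2 : 2 ≤ k := by omega
    have hK4 : 4 ≤ 2^k := by
      calc 4 = 2^2 := rfl
      _ ≤ 2^k := Nat.pow_le_pow_right (by norm_num) hk2
    have hbig : ∀ m : ℕ, 2^k ≤ m → (D n)⁻¹' {m} = ∅ := by
      intro m hm
      ext ω
      simp only [Set.mem_preimage, Set.mem_singleton_iff, Set.mem_empty_iff_false, iff_false]
      intro hDm
      rw [hD] at hDm
      split at hDm
      · rename_i hcond
        rw [hDm] at hcond
        have hlog : k ≤ Nat.log 2 m := Nat.le_log_of_pow_le (by norm_num) hm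
        have : 2 * k ≤ n := by omega
        rw [binLen] at hcond
        omega
      · omega
    have hmid : ∀ m : ℕ, 2 ≤ m → m < 2^k → (D n)⁻¹' {m} = N ⁻¹' {m} := by
      intro m hm2 hmK
      ext ω
      simp only [Set.mem_preimage, Set.mem_singleton_iff]
      rw [hD]
      constructor
      · intro h
        split at h
        · exact h
        · omega
      · intro h
        have hcond : 2 * binLen (N ω) ≤ n := by
          rw [h, binLen]
          have := Nat.log_lt_of_lt_pow (by omega : m ≠ 0) hmK
          have h2 : 2 * k ≤ n := by omega
          omega
        rw [if_pos hcond]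
        exact h
    have hq1 : pr μ ((D n)⁻¹' {1}) = 0 := by
      have hsub : (D n)⁻¹' {1} ⊆ N ⁻¹' {1} := by
        intro ω h
        simp only [Set.mem_preimage, Set.mem_singleton_iff] at h ⊢
        rw [hD] at h
        split at h
        · exact h
        · omega
      have h1 : μ (N ⁻¹' {1}) = 0 := hprz _ (hsupp 1 (by norm_num))
      have := measure_mono (μ := μ) hsub
      rw [h1, le_zero_iff] at this
      rw [pr, this, ENNReal.toReal_zero]
    have htsum : Hent μ (D n)
        = ∑ m ∈ Finset.range (2^k),
            -(pr μ ((D n)⁻¹' {m}) * log2 (pr μ ((D n)⁻¹' {m}))) := by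
      apply tsum_eq_sum
      intro m hm
      rw [Finset.mem_range, not_lt] at hm
      rw [hbig m hm]
      simp [pr]
    rw [htsum, Finset.range_eq_Ico,
      Finset.sum_eq_sum_Ico_succ_bot (by omega : 0 < 2^k),
      Finset.sum_eq_sum_Ico_succ_bot (by omega : 1 < 2^k), hq1]
    simp only [zero_mul, neg_zero, zero_add]
    congr 1
    apply Finset.sum_congr rfl
    intro m hm
    rw [Finset.mem_Ico] at hm
    rw [hmid m hm.1 hm.2, hdist m hm.1]
  -- constants
  obtain ⟨c₀, hc₀def⟩ : ∃ c : ℝ, c = |log2 C| + 1 := ⟨_, rfl⟩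
  have hc₀1 : 1 ≤ c₀ := by rw [hc₀def]; linarith [abs_nonneg (log2 C)]
  obtain ⟨j₀, hj₀def⟩ : ∃ j : ℕ, j = ⌈2*c₀⌉₊ := ⟨_, rfl⟩
  have hj₀1 : 1 ≤ j₀ := by
    rw [hj₀def]
    exact Nat.one_le_ceil_iff.mpr (by linarith)
  have h2j₀ : (2:ℕ) ≤ 2^j₀ := by
    calc (2:ℕ) = 2^1 := (pow_one 2).symm
    _ ≤ 2^j₀ := Nat.pow_le_pow_right (by norm_num) hj₀1
  have hj₀ge : 2*|log2 C| ≤ (j₀:ℝ) := by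
    rw [hj₀def]
    have h := Nat.le_ceil (2*c₀)
    have h2 : 2*|log2 C| ≤ 2*c₀ := by rw [hc₀def]; linarith [abs_nonneg (log2 C)]
    linarith
  -- per-m facts
  have hL1 : ∀ m : ℕ, 2 ≤ m → 1 ≤ log2 m := by
    intro m hm
    exact one_le_log2 (by exact_mod_cast hm)
  have hppos : ∀ m : ℕ, 2 ≤ m → 0 < C / ((m : ℝ) * log2 m ^ α) := by
    intro m hm
    have h1 := hL1 m hm
    have h2 : (0:ℝ) < m := by positivity
    have h3 : (0:ℝ) < log2 m ^ α := Real.rpow_pos_of_pos (by linarith) α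
    positivity
  have hple : ∀ m : ℕ, 2 ≤ m → C / ((m : ℝ) * log2 m ^ α) ≤ 1 := by
    intro m hm
    rw [← hdist m hm]
    exact hpr1 _
  have hfeq : ∀ m : ℕ, 2 ≤ m →
      -((C / ((m : ℝ) * log2 m ^ α)) * log2 (C / ((m : ℝ) * log2 m ^ α)))
        = (C / ((m : ℝ) * log2 m ^ α)) * (log2 m + α * log2 (log2 m) - log2 C) := by
    intro m hm
    have h1 := hL1 m hm
    have hLpos : (0:ℝ) < log2 m := by linarith
    have hmpos : (0:ℝ) < m := by positivity
    have h3 : (0:ℝ) < log2 m ^ α := Real.rpow_pos_of_pos hLpos α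
    rw [log2_div (ne_of_gt hCpos) (by positivity), log2_mul (ne_of_gt hmpos) (ne_of_gt h3),
      log2_rpow hLpos]
    ring
  have hLsub : ∀ m : ℕ, 2 ≤ m →
      (m:ℝ) * log2 m ^ (α-1) = ((m:ℝ) * log2 m ^ α) / log2 m := by
    intro m hm
    have h1 := hL1 m hm
    have hLpos : (0:ℝ) < log2 m := by linarith
    rw [Real.rpow_sub hLpos, Real.rpow_one]
    ring
  have hub : ∀ m : ℕ, 2 ≤ m →
      -((C / ((m : ℝ) * log2 m ^ α)) * log2 (C / ((m : ℝ) * log2 m ^ α)))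
        ≤ (5+c₀)*C / ((m:ℝ) * log2 m ^ (α-1)) := by
    intro m hm
    have h1 := hL1 m hm
    have hLpos : (0:ℝ) < log2 m := by linarith
    have hmpos : (0:ℝ) < m := by positivity
    have h3 : (0:ℝ) < log2 m ^ α := Real.rpow_pos_of_pos hLpos α
    have hbd : log2 m + α * log2 (log2 m) - log2 C ≤ (5+c₀) * log2 m := by
      have e1 : log2 (log2 m) ≤ 2 * log2 m := log2_le_two_mul h1
      have e2 : 0 ≤ log2 (log2 m) := log2_nonneg h1
      have e3 : -log2 C ≤ |log2 C| := neg_le_abs _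
      have e4 : |log2 C| ≤ c₀ := by rw [hc₀def]; linarith
      nlinarith
    rw [hfeq m hm]
    have hp := hppos m hm
    calc (C / ((m : ℝ) * log2 m ^ α)) * (log2 m + α * log2 (log2 m) - log2 C)
        ≤ (C / ((m : ℝ) * log2 m ^ α)) * ((5+c₀) * log2 m) :=
          mul_le_mul_of_nonneg_left hbd hp.le
      _ = (5+c₀)*C / ((m:ℝ) * log2 m ^ (α-1)) := by
          rw [hLsub m hm]
          field_simp
  have hlb : ∀ m : ℕ, 2^j₀ ≤ m →
      (C/2) / ((m:ℝ) * log2 m ^ (α-1))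
        ≤ -((C / ((m : ℝ) * log2 m ^ α)) * log2 (C / ((m : ℝ) * log2 m ^ α))) := by
    intro m hm'
    have hm : 2 ≤ m := le_trans h2j₀ hm'
    have h1 := hL1 m hm
    have hLpos : (0:ℝ) < log2 m := by linarith
    have hmpos : (0:ℝ) < m := by positivity
    have hLj : (j₀:ℝ) ≤ log2 m := by
      have hcast : ((2^j₀ : ℕ):ℝ) = (2:ℝ)^j₀ := by push_cast; ring
      have h2m : ((2:ℝ))^j₀ ≤ (m:ℝ) := by rw [← hcast]; exact_mod_cast hm'
      have hh := log2_mono (by positivity : (0:ℝ) < (2:ℝ)^j₀) h2m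
      rw [log2_pow] at hh
      exact hh
    have hbd : log2 m / 2 ≤ log2 m + α * log2 (log2 m) - log2 C := by
      have e2 : 0 ≤ log2 (log2 m) := log2_nonneg h1
      have e3 : log2 C ≤ |log2 C| := le_abs_self _
      have e5 : 0 ≤ α * log2 (log2 m) := mul_nonneg (by linarith) e2
      linarith [hj₀ge]
    rw [hfeq m hm]
    have hp := hppos m hm
    calc (C/2) / ((m:ℝ) * log2 m ^ (α-1))
        = (C / ((m : ℝ) * log2 m ^ α)) * (log2 m / 2) := by
          rw [hLsub m hm]
          field_simp
      _ ≤ (C / ((m : ℝ) * log2 m ^ α)) * (log2 m + α * log2 (log2 m) - log2 C) :=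
          mul_le_mul_of_nonneg_left hbd hp.le
  have hfnn : ∀ m : ℕ, 2 ≤ m →
      0 ≤ -((C / ((m : ℝ) * log2 m ^ α)) * log2 (C / ((m : ℝ) * log2 m ^ α))) := by
    intro m hm
    exact negmullog2_nonneg (hppos m hm).le (hple m hm)
  have hLgej : ∀ (j m : ℕ), 2^j ≤ m → (j:ℝ) ≤ log2 m := by
    intro j m hjm
    have hcast : ((2^j : ℕ):ℝ) = (2:ℝ)^j := by push_cast; ring
    have h2m : ((2:ℝ))^j ≤ (m:ℝ) := by rw [← hcast]; exact_mod_cast hjm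
    have hh := log2_mono (by positivity : (0:ℝ) < (2:ℝ)^j) h2m
    rw [log2_pow] at hh
    exact hh
  have hLlej : ∀ (j m : ℕ), 1 ≤ m → m ≤ 2^j → log2 m ≤ (j:ℝ) := by
    intro j m h1 hjm
    have hcast : ((2^j : ℕ):ℝ) = (2:ℝ)^j := by push_cast; ring
    have h2m : (m:ℝ) ≤ ((2:ℝ))^j := by rw [← hcast]; exact_mod_cast hjm
    have hh := log2_mono (by exact_mod_cast h1 : (0:ℝ) < (m:ℝ)) h2m
    rw [log2_pow] at hh
    exact hh
  have hrinv : ∀ (x : ℝ), 0 ≤ x → x^(1-α) = (x^(α-1))⁻¹ := by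
    intro x hx
    rw [show (1:ℝ)-α = -(α-1) by ring, Real.rpow_neg hx]
  -- block upper bound
  have hblocku : ∀ j : ℕ, 1 ≤ j →
      ∑ m ∈ Finset.Ico (2^j : ℕ) (2^(j+1)),
          -((C / ((m : ℝ) * log2 m ^ α)) * log2 (C / ((m : ℝ) * log2 m ^ α)))
        ≤ (5+c₀)*C * (j:ℝ)^(1-α) := by
    intro j hj
    have hjpos : (0:ℝ) < j := by exact_mod_cast hj
    have hpow : (0:ℝ) < (j:ℝ)^(α-1) := Real.rpow_pos_of_pos hjpos _
    have h2jpos : (0:ℝ) < (2:ℝ)^j := by positivity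
    have hterm : ∀ m ∈ Finset.Ico (2^j : ℕ) (2^(j+1)),
        -((C / ((m : ℝ) * log2 m ^ α)) * log2 (C / ((m : ℝ) * log2 m ^ α)))
          ≤ (5+c₀)*C / ((2^j:ℕ) * (j:ℝ)^(α-1)) := by
      intro m hm
      rw [Finset.mem_Ico] at hm
      have hm2 : 2 ≤ m := le_trans (by
        calc (2:ℕ) = 2^1 := (pow_one 2).symm
        _ ≤ 2^j := Nat.pow_le_pow_right (by norm_num) hj) hm.1
      have hL := hL1 m hm2
      have hLj := hLgej j m hm.1
      have hmpos : (0:ℝ) < m := by positivity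
      refine le_trans (hub m hm2) ?_
      apply div_le_div_of_nonneg_left ?_ ?_ ?_
      · have : (0:ℝ) ≤ 5 + c₀ := by linarith
        positivity
      · push_cast
        positivity
      · push_cast
        apply mul_le_mul ?_ ?_ hpow.le hmpos.le
        · exact_mod_cast hm.1
        · exact Real.rpow_le_rpow (by linarith) hLj (by linarith)
    have hcard := Finset.sum_le_card_nsmul _ _ _ hterm
    rw [Nat.card_Ico] at hcard
    have hc2 : 2^(j+1) - 2^j = 2^j := by
      rw [pow_succ]; omega
    rw [hc2, nsmul_eq_mul] at hcard
    refine le_trans hcard (le_of_eq ?_)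
    push_cast
    rw [hrinv (j:ℝ) (by positivity)]
    field_simp
  -- block lower bound
  have hblockl : ∀ j : ℕ, j₀ ≤ j →
      (C/4) * ((j:ℝ)+1)^(1-α)
        ≤ ∑ m ∈ Finset.Ico (2^j : ℕ) (2^(j+1)),
            -((C / ((m : ℝ) * log2 m ^ α)) * log2 (C / ((m : ℝ) * log2 m ^ α))) := by
    intro j hjj
    have hj : 1 ≤ j := le_trans hj₀1 hjj
    have hj1pos : (0:ℝ) < (j:ℝ)+1 := by positivity
    have hpow : (0:ℝ) < ((j:ℝ)+1)^(α-1) := Real.rpow_pos_of_pos hj1pos _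
    have hterm : ∀ m ∈ Finset.Ico (2^j : ℕ) (2^(j+1)),
        (C/2) / ((2^(j+1):ℕ) * ((j:ℝ)+1)^(α-1))
          ≤ -((C / ((m : ℝ) * log2 m ^ α)) * log2 (C / ((m : ℝ) * log2 m ^ α))) := by
      intro m hm
      rw [Finset.mem_Ico] at hm
      have hmj₀ : 2^j₀ ≤ m := le_trans (Nat.pow_le_pow_right (by norm_num) hjj) hm.1
      have hm2 : 2 ≤ m := le_trans (by
        calc (2:ℕ) = 2^1 := (pow_one 2).symm
        _ ≤ 2^j := Nat.pow_le_pow_right (by norm_num) hj) hm.1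
      have hL := hL1 m hm2
      have hLj : log2 m ≤ (j:ℝ)+1 := by
        have := hLlej (j+1) m (by omega) (le_of_lt hm.2)
        push_cast at this
        linarith
      have hmpos : (0:ℝ) < m := by positivity
      refine le_trans ?_ (hlb m hmj₀)
      apply div_le_div_of_nonneg_left (by linarith) ?_ ?_
      · positivity
      · push_cast
        apply mul_le_mul ?_ ?_ (by positivity) (by positivity)
        · exact_mod_cast le_of_lt hm.2
        · exact Real.rpow_le_rpow (by linarith) hLj (by linarith)
    have hcard := Finset.card_nsmul_le_sum _ _ _ hterm
    rw [Nat.card_Ico] at hcard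
    have hc2 : 2^(j+1) - 2^j = 2^j := by
      rw [pow_succ]; omega
    rw [hc2, nsmul_eq_mul] at hcard
    refine le_trans (le_of_eq ?_) hcard
    push_cast
    rw [hrinv ((j:ℝ)+1) (by positivity), pow_succ]
    field_simp
    ring
  -- key bounds
  have key : ∀ n : ℕ, 2^(j₀+3) ≤ n →
      (C/4) * ∑ j ∈ Finset.Ico j₀ (n/2), (((j:ℕ):ℝ)+1)^(1-α) ≤ Hent μ (D n) ∧
      Hent μ (D n) ≤ 2 + (5+c₀)*C * ∑ j ∈ Finset.Ico 1 (n/2), ((j:ℕ):ℝ)^(1-α) := by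
    intro n hn
    have hj3 : j₀ + 3 < 2^(j₀+3) := Nat.lt_two_pow_self
    have hn4 : 4 ≤ n := by omega
    have hkj : j₀ + 2 ≤ n/2 := by
      have h1 : 2^(j₀+3) = 2*2^(j₀+2) := by rw [pow_succ]; ring
      have h2 : j₀+2 < 2^(j₀+2) := Nat.lt_two_pow_self
      omega
    have hk1 : 1 ≤ n/2 := by omega
    rw [hrep n hn4]
    have hq0a := hpr0 ((D n)⁻¹' {0})
    have hq0b := hpr1 ((D n)⁻¹' {0})
    have hsplit : Finset.Ico (2:ℕ) (2^(n/2)) = Finset.Ico (2^1) (2^(n/2)) := by norm_num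
    constructor
    · -- lower
      have hsub : ∑ m ∈ Finset.Ico (2^j₀ : ℕ) (2^(n/2)),
            -((C / ((m : ℝ) * log2 m ^ α)) * log2 (C / ((m : ℝ) * log2 m ^ α)))
          ≤ ∑ m ∈ Finset.Ico (2:ℕ) (2^(n/2)),
            -((C / ((m : ℝ) * log2 m ^ α)) * log2 (C / ((m : ℝ) * log2 m ^ α))) := by
        apply Finset.sum_le_sum_of_subset_of_nonneg
        · exact Finset.Ico_subset_Ico h2j₀ le_rfl
        · intro m hm _
          rw [Finset.mem_Ico] at hm
          exact hfnn m hm.1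
      have hdy := dyadic_split
        (fun m => -((C / ((m : ℝ) * log2 m ^ α)) * log2 (C / ((m : ℝ) * log2 m ^ α))))
        j₀ (n/2) (by omega)
      have hlow : (C/4) * ∑ j ∈ Finset.Ico j₀ (n/2), (((j:ℕ):ℝ)+1)^(1-α)
          ≤ ∑ m ∈ Finset.Ico (2^j₀ : ℕ) (2^(n/2)),
            -((C / ((m : ℝ) * log2 m ^ α)) * log2 (C / ((m : ℝ) * log2 m ^ α))) := by
        rw [hdy, Finset.mul_sum]
        apply Finset.sum_le_sum
        intro j hjmem
        rw [Finset.mem_Ico] at hjmem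
        exact hblockl j hjmem.1
      have hfq0 := negmullog2_nonneg hq0a hq0b
      linarith
    · -- upper
      have hdy := dyadic_split
        (fun m => -((C / ((m : ℝ) * log2 m ^ α)) * log2 (C / ((m : ℝ) * log2 m ^ α))))
        1 (n/2) hk1
      have hup : ∑ m ∈ Finset.Ico (2:ℕ) (2^(n/2)),
            -((C / ((m : ℝ) * log2 m ^ α)) * log2 (C / ((m : ℝ) * log2 m ^ α)))
          ≤ (5+c₀)*C * ∑ j ∈ Finset.Ico 1 (n/2), ((j:ℕ):ℝ)^(1-α) := by
        rw [hsplit, hdy, Finset.mul_sum]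
        apply Finset.sum_le_sum
        intro j hjmem
        rw [Finset.mem_Ico] at hjmem
        exact hblocku j hjmem.1
      have hfq0 := negmullog2_le_two hq0a hq0b
      linarith
  have hA0 : 0 ≤ (5+c₀)*C := by nlinarith
  constructor
  · -- case α < 2
    intro hα2'
    have h2α : (0:ℝ) < 2 - α := by linarith
    refine ⟨C/24, 2 + (5+c₀)*C/(2-α), by positivity, by positivity, 2^(4*j₀+6), ?_⟩
    intro n hn
    have hpowlin : 4*j₀+6 < 2^(4*j₀+6) := Nat.lt_two_pow_self
    have hn' : 2^(j₀+3) ≤ n := le_trans (Nat.pow_le_pow_right (by norm_num) (by omega)) hn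
    obtain ⟨hlow, hup⟩ := key n hn'
    have hk2j : 2*j₀ ≤ n/2 := by omega
    have hk1 : 1 ≤ n/2 := by omega
    have hn1 : 1 ≤ n := by omega
    have hkn : ((n/2 : ℕ):ℝ) ≤ (n:ℝ) := by exact_mod_cast Nat.div_le_self n 2
    have hkpos : (0:ℝ) < ((n/2 : ℕ):ℝ) := by exact_mod_cast hk1
    have hnpos : (0:ℝ) < (n:ℝ) := by exact_mod_cast hn1
    have hn2α1 : 1 ≤ (n:ℝ)^(2-α) := by
      rw [show (1:ℝ) = 1^(2-α) from (Real.one_rpow _).symm]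
      exact Real.rpow_le_rpow (by norm_num) (by exact_mod_cast hn1) h2α.le
    constructor
    · -- lower bound
      have hj := jsum_lower_lt hα1 hα2' j₀ (n/2) hj₀1 hk2j
      have h3k : (n:ℝ) ≤ 3*((n/2:ℕ):ℝ) := by
        have : n ≤ 3*(n/2) := by omega
        exact_mod_cast this
      have hdivk : (n:ℝ)/3 ≤ ((n/2:ℕ):ℝ) := by linarith
      have hk2a : ((n:ℝ)/3)^(2-α) ≤ ((n/2:ℕ):ℝ)^(2-α) :=
        Real.rpow_le_rpow (by positivity) hdivk h2α.le
      have hdr : ((n:ℝ)/3)^(2-α) = (n:ℝ)^(2-α)/(3:ℝ)^(2-α) :=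
        Real.div_rpow hnpos.le (by norm_num : (0:ℝ) ≤ 3) (2-α)
      have h3le : (3:ℝ)^(2-α) ≤ 3 := by
        calc (3:ℝ)^(2-α) ≤ (3:ℝ)^(1:ℝ) :=
              Real.rpow_le_rpow_of_exponent_le (by norm_num) (by linarith)
        _ = 3 := Real.rpow_one 3
      have h3pos : (0:ℝ) < (3:ℝ)^(2-α) := Real.rpow_pos_of_pos (by norm_num) _
      have hd2 : (n:ℝ)^(2-α)/3 ≤ (n:ℝ)^(2-α)/(3:ℝ)^(2-α) :=
        div_le_div_of_nonneg_left (by positivity) h3pos h3le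
      have hfin : (n:ℝ)^(2-α)/3 ≤ ((n/2:ℕ):ℝ)^(2-α) := by linarith
      have hsum : (1/2) * ((n:ℝ)^(2-α)/3)
          ≤ ∑ j ∈ Finset.Ico j₀ (n/2), (((j:ℕ):ℝ)+1)^(1-α) := by
        refine le_trans ?_ hj
        apply mul_le_mul_of_nonneg_left hfin (by norm_num)
      have hC4 : (0:ℝ) < C/4 := by positivity
      have := mul_le_mul_of_nonneg_left hsum hC4.le
      calc C/24 * (n:ℝ)^(2-α) = C/4 * ((1/2) * ((n:ℝ)^(2-α)/3)) := by ring
      _ ≤ C/4 * ∑ j ∈ Finset.Ico j₀ (n/2), (((j:ℕ):ℝ)+1)^(1-α) := this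
      _ ≤ Hent μ (D n) := hlow
    · -- upper bound
      have hj := jsum_upper_lt hα1 hα2' (n/2) hk1
      have hkr : ((n/2:ℕ):ℝ)^(2-α) ≤ (n:ℝ)^(2-α) :=
        Real.rpow_le_rpow hkpos.le hkn h2α.le
      have hs2 : ∑ j ∈ Finset.Ico 1 (n/2), ((j:ℕ):ℝ)^(1-α) ≤ (n:ℝ)^(2-α)/(2-α) := by
        refine le_trans hj ?_
        exact div_le_div_of_nonneg_right hkr h2α.le
      have hmul := mul_le_mul_of_nonneg_left hs2 hA0
      calc Hent μ (D n) ≤ 2 + (5+c₀)*C * ∑ j ∈ Finset.Ico 1 (n/2), ((j:ℕ):ℝ)^(1-α) := hup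
      _ ≤ 2 + (5+c₀)*C * ((n:ℝ)^(2-α)/(2-α)) := by linarith
      _ ≤ 2*(n:ℝ)^(2-α) + ((5+c₀)*C/(2-α)) * (n:ℝ)^(2-α) := by
          have : (5+c₀)*C * ((n:ℝ)^(2-α)/(2-α)) = ((5+c₀)*C/(2-α)) * (n:ℝ)^(2-α) := by
            field_simp
          rw [this]
          linarith
      _ = (2 + (5+c₀)*C/(2-α)) * (n:ℝ)^(2-α) := by ring
  · -- case α = 2
    intro hα2'
    subst hα2'
    refine ⟨C/16, 2 + 2*((5+c₀)*C), by positivity, by positivity, 2^(4*j₀+6), ?_⟩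
    intro n hn
    have hpowlin : 4*j₀+6 < 2^(4*j₀+6) := Nat.lt_two_pow_self
    have hn' : 2^(j₀+3) ≤ n := le_trans (Nat.pow_le_pow_right (by norm_num) (by omega)) hn
    obtain ⟨hlow, hup⟩ := key n hn'
    have hk2 : 2 ≤ n/2 := by omega
    have hn1 : 2 ≤ n := by omega
    have hnpos : (0:ℝ) < (n:ℝ) := by positivity
    have hinv : ∀ x : ℝ, x^((1:ℝ)-2) = x⁻¹ := by
      intro x
      rw [show (1:ℝ)-2 = -1 by norm_num, Real.rpow_neg_one]
    have hlogn : (4*(j₀:ℝ)+6) ≤ log2 n := by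
      have := hLgej (4*j₀+6) n hn
      push_cast at this
      linarith
    have hlog1 : 1 ≤ log2 n := by
      have h0 : (0:ℝ) ≤ (j₀:ℝ) := Nat.cast_nonneg _
      linarith
    constructor
    · -- lower
      have hje := jsum_lower_eq j₀ (n/2) hj₀1 (by omega)
      have hsc : ∑ j ∈ Finset.Ico j₀ (n/2), (((j:ℕ):ℝ)+1)^((1:ℝ)-2)
          = ∑ j ∈ Finset.Ico j₀ (n/2), (((j:ℕ):ℝ)+1)⁻¹ := by
        apply Finset.sum_congr rfl
        intro j _
        rw [hinv]
      rw [hsc] at hlow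
      -- log2 (k+1) ≥ log2 n - 1
      have hk12 : (n:ℝ)/2 ≤ ((n/2:ℕ):ℝ)+1 := by
        have : n ≤ 2*(n/2) + 2 := by omega
        have h2 : (n:ℝ) ≤ 2*((n/2:ℕ):ℝ) + 2 := by exact_mod_cast this
        linarith
      have hlogk : log2 ((n:ℝ)/2) ≤ log2 (((n/2:ℕ):ℝ)+1) :=
        log2_mono (by positivity) hk12
      have hlogdiv : log2 ((n:ℝ)/2) = log2 n - 1 := by
        rw [log2_div (ne_of_gt hnpos) (by norm_num), log2_two]
      have hj₀l : log2 ((j₀:ℝ)+1) ≤ 2*((j₀:ℝ)+1) :=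
        log2_le_two_mul (by
          have h : (0:ℝ) ≤ (j₀:ℝ) := by exact_mod_cast Nat.zero_le j₀
          linarith)
      have hgap : (1/2) * log2 n ≤ log2 (((n/2:ℕ):ℝ)+1) - log2 ((j₀:ℝ)+1) := by
        have h1 : log2 n - 1 ≤ log2 (((n/2:ℕ):ℝ)+1) := by
          rw [← hlogdiv]; exact hlogk
        linarith
      have hC8 : (0:ℝ) ≤ C/4 := by positivity
      have h2 := mul_le_mul_of_nonneg_left (le_trans (mul_le_mul_of_nonneg_left hgap (by norm_num : (0:ℝ) ≤ 1/2)) hje) hC8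
      calc C/16 * log2 n = C/4 * ((1/2) * ((1/2) * log2 n)) := by ring
      _ ≤ C/4 * ∑ j ∈ Finset.Ico j₀ (n/2), (((j:ℕ):ℝ)+1)⁻¹ := h2
      _ ≤ Hent μ (D n) := hlow
    · -- upper
      have hje := jsum_upper_eq (n/2) hk2
      have hsc : ∑ j ∈ Finset.Ico 1 (n/2), ((j:ℕ):ℝ)^((1:ℝ)-2)
          = ∑ j ∈ Finset.Ico 1 (n/2), ((j:ℕ):ℝ)⁻¹ := by
        apply Finset.sum_congr rfl
        intro j _
        rw [hinv]
      rw [hsc] at hup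
      have hlogkn : log2 ((n/2:ℕ):ℝ) ≤ log2 n :=
        log2_mono (by exact_mod_cast (by omega : 0 < n/2)) (by exact_mod_cast Nat.div_le_self n 2)
      have hs2 : ∑ j ∈ Finset.Ico 1 (n/2), ((j:ℕ):ℝ)⁻¹ ≤ 1 + log2 n := by
        linarith
      have hmul := mul_le_mul_of_nonneg_left hs2 hA0
      calc Hent μ (D n) ≤ 2 + (5+c₀)*C * ∑ j ∈ Finset.Ico 1 (n/2), ((j:ℕ):ℝ)⁻¹ := hup
      _ ≤ 2 + (5+c₀)*C * (1 + log2 n) := by linarith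
      _ ≤ 2*log2 n + (5+c₀)*C * (2 * log2 n) := by nlinarith
      _ = (2 + 2*((5+c₀)*C)) * log2 n := by ring
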